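/- Let F be a field with char(F) ≠ 2, 3 and let A be the 2-dimensional algebra over F with e1·e1 = (1/2)e1, e1·e2 = 0, e2·e1 = (1/2)e2, e2·e2 = 0. Then every automorphism of A has matrix [[1,0],[z,t]] with respect to the basis (e1,e2), for some z ∈ F and nonzero t ∈ F, and conversely every such matrix defines an automorphism. -/

import Mathlib

/-- Multiplication on `F × F` given by `e1·e1 = (1/2)e1`, `e1·e2 = 0`,
`e2·e1 = (1/2)e2`, `e2·e2 = 0`, extended bilinearly. -/
def mul5 {F : Type*} [Field F] (x y : F × F) : F × F :=
  ((1/2 : F) * x.1 * y.1, (1/2 : F) * x.2 * y.1)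

theorem stmt_5 {F : Type*} [Field F] (h2 : ringChar F ≠ 2) (h3 : ringChar F ≠ 3)
    (f : (F × F) ≃ₗ[F] (F × F)) :
    (∀ x y : F × F, f (mul5 x y) = mul5 (f x) (f y)) ↔
      ∃ z t : F, t ≠ 0 ∧ f (1, 0) = (1, z) ∧ f (0, 1) = (0, t) := by
  have htwo : (2 : F) ≠ 0 := Ring.two_ne_zero h2
  have key : ∀ c d : F, f (c, d) =
      (c * (f (1, 0)).1 + d * (f (0, 1)).1, c * (f (1, 0)).2 + d * (f (0, 1)).2) := by
    intro c d
    have hx : ((c, d) : F × F) = c • ((1, 0) : F × F) + d • ((0, 1) : F × F) := by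
      simp [Prod.ext_iff]
    rw [hx, map_add, map_smul, map_smul]
    simp [Prod.ext_iff, Prod.smul_def, smul_eq_mul]
  constructor
  · intro H
    set a := (f (1, 0)).1 with ha
    set b := (f (1, 0)).2 with hb
    set c := (f (0, 1)).1 with hc
    set d := (f (0, 1)).2 with hd
    have hfe1 : f (1, 0) = (a, b) := by simp [ha, hb]
    have hfe2 : f (0, 1) = (c, d) := by simp [hc, hd]
    have h11 := H (1, 0) (1, 0)
    have h21 := H (0, 1) (1, 0)
    have h22 := H (0, 1) (0, 1)
    simp only [mul5] at h11 h21 h22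
    rw [show ((1/2 : F) * 1 * 1, (1/2 : F) * 0 * 1) = (((1:F)/2), (0:F)) by norm_num,
      key] at h11
    rw [show ((1/2 : F) * 0 * 1, (1/2 : F) * 1 * 1) = ((0:F), ((1:F)/2)) by norm_num,
      key] at h21
    rw [show ((1/2 : F) * 0 * 0, (1/2 : F) * 1 * 0) = ((0:F), (0:F)) by norm_num,
      key] at h22
    simp only [Prod.mk.injEq, ← ha, ← hb, ← hc, ← hd] at h11 h21 h22
    have ea : a * (a - 1) = 0 := by
      have h := h11.1; field_simp at h; linear_combination -h
    have hne1 : f (1, 0) ≠ 0 := fun h => by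
      have : ((1, 0) : F × F) = 0 := f.injective (by simpa using h)
      simp [Prod.ext_iff] at this
    have hne2 : f (0, 1) ≠ 0 := fun h => by
      have : ((0, 1) : F × F) = 0 := f.injective (by simpa using h)
      simp [Prod.ext_iff] at this
    have ha1 : a = 1 := by
      rcases mul_eq_zero.mp ea with h | h
      · exfalso
        have hb0 : b = 0 := by
          have h' := h11.2; field_simp at h'
          -- b = a * b, a = 0 ⇒ b = 0
          have : b = a * b := by linear_combination h'
          rw [h] at this; simpa using this
        apply hne1
        rw [hfe1, h, hb0]; rfl
      · exact sub_eq_zero.mp h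
    have hc0 : c = 0 := by
      have h' := h22.1; field_simp at h'
      have : c * c = 0 := by linear_combination -h'
      exact mul_self_eq_zero.mp this
    have hdne : d ≠ 0 := fun hd0 => hne2 (by rw [hfe2, hc0, hd0]; rfl)
    exact ⟨b, d, hdne, by rw [hfe1, ha1], by rw [hfe2, hc0]⟩
  · rintro ⟨z, t, ht, hf1, hf2⟩ x y
    have kx : f x = (x.1 * 1 + x.2 * 0, x.1 * z + x.2 * t) := by
      have h := key x.1 x.2; rw [Prod.mk.eta] at h; rw [h, hf1, hf2]
    have ky : f y = (y.1 * 1 + y.2 * 0, y.1 * z + y.2 * t) := by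
      have h := key y.1 y.2; rw [Prod.mk.eta] at h; rw [h, hf1, hf2]
    simp only [mul5, kx, ky]
    rw [key, hf1, hf2]
    simp only [Prod.mk.injEq]
    constructor <;> ring
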